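/- Let T > k ≥ 1 be integers, let V be a T×T diagonal matrix with positive diagonal entries, let F be a T×k real matrix of full column rank, and let G be a T×(T−k) real matrix with F' V^{-1} G = 0 and G' V^{-1} G = I_{T−k}. Let X be the ((T−k)(T−k+1)/2)×T matrix whose t-th column is vech(G' E_{t,t} G), and set Φ := V − F (F' V^{-1} F)^{-1} F'. Then the following three conditions are equivalent: (a) the T×T matrix M_{F,V}^{⊙2} is invertible; (b) X has full column rank T (equivalently, X'X is invertible); (c) the T×T matrix Φ^{⊙2} is invertible. -/

import Mathlib

open Matrix

noncomputable section

/-- Half-vectorization of a symmetric matrix, with diagonal entries scaled by `1/√2`,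
indexed by pairs `(i, j)` with `i ≤ j`. -/
def vech {m : ℕ} (Z : Matrix (Fin m) (Fin m) ℝ) :
    {q : Fin m × Fin m // q.1 ≤ q.2} → ℝ :=
  fun q => if q.val.1 = q.val.2 then Z q.val.1 q.val.2 / Real.sqrt 2 else Z q.val.1 q.val.2

/-- A square real matrix is a unit iff it has full rank. -/
lemma isUnit_iff_rank_eq {n : ℕ} (N : Matrix (Fin n) (Fin n) ℝ) : IsUnit N ↔ N.rank = n := by
  constructor
  · intro h; simpa using N.rank_of_isUnit h
  · intro h
    rw [← Matrix.mulVec_surjective_iff_isUnit]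
    have hr : LinearMap.range N.mulVecLin = ⊤ := by
      apply Submodule.eq_top_of_finrank_eq
      rw [Matrix.rank] at h
      simp [h]
    have := LinearMap.range_eq_top.mp hr
    intro y
    obtain ⟨x, hx⟩ := this y
    exact ⟨x, by simpa [Matrix.mulVecLin_apply] using hx⟩

/-- A matrix of full column rank has injective `mulVec`. -/
lemma mulVec_inj_of_rank {T k : ℕ} (F : Matrix (Fin T) (Fin k) ℝ) (hF : F.rank = k) :
    Function.Injective F.mulVec := by
  have h1 := LinearMap.finrank_range_add_finrank_ker F.mulVecLin
  rw [Matrix.rank] at hF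
  rw [hF] at h1
  simp only [Module.finrank_fintype_fun_eq_card, Fintype.card_fin] at h1
  have h0 : Module.finrank ℝ (LinearMap.ker F.mulVecLin) = 0 := by omega
  have hb := Submodule.finrank_eq_zero.mp h0
  have hinj : Function.Injective F.mulVecLin := by
    rw [← LinearMap.ker_eq_bot]; exact hb
  intro x y hxy
  exact hinj (by simpa [Matrix.mulVecLin_apply] using hxy)

lemma diag_inv_eq {T : ℕ} (d : Fin T → ℝ) (hd : ∀ t, 0 < d t) :
    (Matrix.diagonal d)⁻¹ = Matrix.diagonal (fun t => (d t)⁻¹) := by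
  apply Matrix.inv_eq_right_inv
  rw [Matrix.diagonal_mul_diagonal]
  simp [mul_inv_cancel₀ (hd _).ne']

/-- The GLS Gram matrix `Fᵀ V⁻¹ F` is invertible. -/
lemma gram_isUnit {T k : ℕ} (d : Fin T → ℝ) (hd : ∀ t, 0 < d t)
    (F : Matrix (Fin T) (Fin k) ℝ) (hF : F.rank = k) :
    IsUnit (Fᵀ * (Matrix.diagonal d)⁻¹ * F) := by
  rw [diag_inv_eq d hd]
  rw [← Matrix.mulVec_injective_iff_isUnit]
  have hFi := mulVec_inj_of_rank F hF
  intro x y hxy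
  have hz : (Fᵀ * Matrix.diagonal (fun t => (d t)⁻¹) * F) *ᵥ (x - y) = 0 := by
    rw [Matrix.mulVec_sub, hxy, sub_self]
  set w := F *ᵥ (x - y) with hw
  have hdot : (x - y) ⬝ᵥ ((Fᵀ * Matrix.diagonal (fun t => (d t)⁻¹) * F) *ᵥ (x - y)) = 0 := by
    rw [hz, dotProduct_zero]
  have hexp : (x - y) ⬝ᵥ ((Fᵀ * Matrix.diagonal (fun t => (d t)⁻¹) * F) *ᵥ (x - y))
      = ∑ t, (d t)⁻¹ * (w t)^2 := by
    rw [← Matrix.mulVec_mulVec, ← Matrix.mulVec_mulVec, Matrix.dotProduct_mulVec,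
      Matrix.vecMul_transpose, ← hw]
    simp [dotProduct, Matrix.mulVec_diagonal]
    ring_nf
    congr 1
    ext t
    ring
  rw [hexp] at hdot
  have hterm : ∀ t ∈ Finset.univ, (0:ℝ) ≤ (d t)⁻¹ * (w t)^2 := fun t _ =>
    mul_nonneg (inv_nonneg.mpr (hd t).le) (sq_nonneg _)
  have hzero := (Finset.sum_eq_zero_iff_of_nonneg hterm).mp hdot
  have hwz : w = 0 := by
    funext t
    have := hzero t (Finset.mem_univ t)
    have hdt : (d t)⁻¹ ≠ 0 := inv_ne_zero (hd t).ne'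
    have := (mul_eq_zero.mp this).resolve_left hdt
    exact pow_eq_zero_iff (n := 2) (by norm_num) |>.mp this
  have : F *ᵥ (x - y) = F *ᵥ 0 := by rw [Matrix.mulVec_zero]; exact hwz
  exact sub_eq_zero.mp (hFi this)

/-- The key projection identity `Φ = G Gᵀ`. -/
lemma phi_eq {T k : ℕ} (hkT : k < T) (d : Fin T → ℝ) (hd : ∀ t, 0 < d t)
    (F : Matrix (Fin T) (Fin k) ℝ) (hF : F.rank = k)
    (G : Matrix (Fin T) (Fin (T - k)) ℝ)
    (hFG : Fᵀ * (Matrix.diagonal d)⁻¹ * G = 0)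
    (hGG : Gᵀ * (Matrix.diagonal d)⁻¹ * G = 1) :
    Matrix.diagonal d - F * (Fᵀ * (Matrix.diagonal d)⁻¹ * F)⁻¹ * Fᵀ = G * Gᵀ := by
  set V : Matrix (Fin T) (Fin T) ℝ := Matrix.diagonal d with hV
  set Vi : Matrix (Fin T) (Fin T) ℝ := V⁻¹ with hVi
  set A : Matrix (Fin k) (Fin k) ℝ := Fᵀ * Vi * F with hA
  have hAu : IsUnit A := gram_isUnit d hd F hF
  have hAdet : IsUnit A.det := (Matrix.isUnit_iff_isUnit_det A).mp hAu
  have hVdet : IsUnit V.det := by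
    rw [hV, Matrix.det_diagonal]
    exact isUnit_iff_ne_zero.mpr (Finset.prod_ne_zero_iff.mpr (fun t _ => (hd t).ne'))
  have hViV : Vi * V = 1 := Matrix.nonsing_inv_mul V hVdet
  have hGF : Gᵀ * Vi * F = 0 := by
    have h := congrArg Matrix.transpose hFG
    have hVsym : Viᵀ = Vi := by
      rw [hVi, hV, diag_inv_eq d hd, Matrix.diagonal_transpose]
    simp only [Matrix.transpose_mul, Matrix.transpose_transpose, Matrix.transpose_zero, hVsym,
      ← Matrix.mul_assoc] at h
    exact h
  have hFΦ : (Fᵀ * Vi) * (V - F * A⁻¹ * Fᵀ) = 0 := by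
    rw [Matrix.mul_sub, Matrix.mul_assoc Fᵀ Vi V, hViV, Matrix.mul_one]
    rw [show (Fᵀ * Vi) * (F * A⁻¹ * Fᵀ) = ((Fᵀ * Vi * F) * A⁻¹) * Fᵀ by
      simp only [Matrix.mul_assoc]]
    rw [← hA, Matrix.mul_nonsing_inv A hAdet, Matrix.one_mul, sub_self]
  have hGΦ : (Gᵀ * Vi) * (V - F * A⁻¹ * Fᵀ) = Gᵀ := by
    rw [Matrix.mul_sub, Matrix.mul_assoc Gᵀ Vi V, hViV, Matrix.mul_one]
    rw [show (Gᵀ * Vi) * (F * A⁻¹ * Fᵀ) = ((Gᵀ * Vi * F) * A⁻¹) * Fᵀ by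
      simp only [Matrix.mul_assoc]]
    rw [hGF, Matrix.zero_mul, Matrix.zero_mul, sub_zero]
  have hFGG : (Fᵀ * Vi) * (G * Gᵀ) = 0 := by
    rw [show (Fᵀ * Vi) * (G * Gᵀ) = (Fᵀ * Vi * G) * Gᵀ by simp only [Matrix.mul_assoc]]
    rw [hFG, Matrix.zero_mul]
  have hGGG : (Gᵀ * Vi) * (G * Gᵀ) = Gᵀ := by
    rw [show (Gᵀ * Vi) * (G * Gᵀ) = (Gᵀ * Vi * G) * Gᵀ by simp only [Matrix.mul_assoc]]
    rw [hGG, Matrix.one_mul]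
  set C : Matrix (Fin k ⊕ Fin (T - k)) (Fin T) ℝ := Matrix.fromRows (Fᵀ * Vi) (Gᵀ * Vi) with hC
  set B : Matrix (Fin T) (Fin k ⊕ Fin (T - k)) ℝ := Matrix.fromCols F G with hB
  have hCB : C * B = Matrix.fromBlocks A 0 0 1 := by
    rw [hC, hB, Matrix.fromRows_mul_fromCols, hFG, hGF, hGG, hA]
  have hCBdet : IsUnit (C * B).det := by
    rw [hCB, Matrix.det_fromBlocks_zero₁₂, Matrix.det_one, mul_one]
    exact hAdet
  have e : Fin k ⊕ Fin (T - k) ≃ Fin T :=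
    finSumFinEquiv.trans (finCongr (Nat.add_sub_cancel' hkT.le))
  set C' : Matrix (Fin T) (Fin T) ℝ := C.submatrix e.symm id with hC'
  set B' : Matrix (Fin T) (Fin T) ℝ := B.submatrix id e.symm with hB'
  have hC'B' : C' * B' = (C * B).submatrix e.symm e.symm := by
    rw [hC', hB']
    have := Matrix.submatrix_mul_equiv C B (⇑e.symm) (Equiv.refl (Fin T)) (⇑e.symm)
    simpa using this
  have hC'det : IsUnit C'.det := by
    have : IsUnit (C' * B').det := by
      rw [hC'B', Matrix.det_submatrix_equiv_self]
      exact hCBdet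
    rw [Matrix.det_mul] at this
    exact isUnit_of_mul_isUnit_left this
  have hkey : C * (V - F * A⁻¹ * Fᵀ) = C * (G * Gᵀ) := by
    rw [hC, Matrix.fromRows_mul, Matrix.fromRows_mul, hFΦ, hGΦ, hFGG, hGGG]
  have hkey' : C' * (V - F * A⁻¹ * Fᵀ) = C' * (G * Gᵀ) := by
    rw [hC']
    have h1 := Matrix.submatrix_mul_equiv C (V - F * A⁻¹ * Fᵀ) (⇑e.symm) (Equiv.refl (Fin T)) id
    have h2 := Matrix.submatrix_mul_equiv C (G * Gᵀ) (⇑e.symm) (Equiv.refl (Fin T)) id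
    simp only [Equiv.coe_refl, Matrix.submatrix_id_id] at h1 h2
    rw [h1, h2, hkey]
  have := congrArg (fun Z => C'⁻¹ * Z) hkey'
  simpa [← Matrix.mul_assoc, Matrix.nonsing_inv_mul C' hC'det] using this

/-- Sum over ordered pairs of a symmetric product, with halved diagonal. -/
lemma sum_pairs {m : ℕ} (h : Fin m → ℝ) :
    ∑ q : {q : Fin m × Fin m // q.1 ≤ q.2},
      (if q.val.1 = q.val.2 then h q.val.1 * h q.val.2 / 2 else h q.val.1 * h q.val.2)
    = (∑ i, h i)^2 / 2 := by
  classical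
  set f : Fin m × Fin m → ℝ :=
    fun q => if q.1 = q.2 then h q.1 * h q.2 / 2 else h q.1 * h q.2 with hf
  set v : Fin m × Fin m → ℝ := fun q => h q.1 * h q.2 with hv
  set u : Finset (Fin m × Fin m) := Finset.univ.filter (fun q => q.1 ≤ q.2) with hu
  have step0 : ∑ q : {q : Fin m × Fin m // q.1 ≤ q.2},
      (if q.val.1 = q.val.2 then h q.val.1 * h q.val.2 / 2 else h q.val.1 * h q.val.2)
      = ∑ q ∈ u, f q := by
    rw [hu]
    exact (Finset.sum_subtype _ (by simp) f).symm
  have hsplit : ∑ q ∈ u, f q =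
      ∑ q ∈ Finset.univ.filter (fun q : Fin m × Fin m => q.1 = q.2), f q
      + ∑ q ∈ Finset.univ.filter (fun q : Fin m × Fin m => q.1 < q.2), f q := by
    rw [← Finset.sum_filter_add_sum_filter_not u (fun q => q.1 = q.2) f]
    congr 1
    · congr 1
      rw [hu]
      ext q
      simp only [Finset.mem_filter, Finset.mem_univ, true_and]
      constructor
      · rintro ⟨_, h2⟩; exact h2
      · intro h2; exact ⟨le_of_eq h2, h2⟩
    · congr 1
      rw [hu]
      ext q
      simp only [Finset.mem_filter, Finset.mem_univ, true_and]
      exact ⟨fun ⟨h1, h2⟩ => lt_of_le_of_ne h1 h2, fun h1 => ⟨le_of_lt h1, ne_of_lt h1⟩⟩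
  have hdiagf : ∑ q ∈ Finset.univ.filter (fun q : Fin m × Fin m => q.1 = q.2), f q
      = (∑ q ∈ Finset.univ.filter (fun q : Fin m × Fin m => q.1 = q.2), v q) / 2 := by
    rw [Finset.sum_div]
    apply Finset.sum_congr rfl
    intro q hq
    simp only [Finset.mem_filter] at hq
    rw [hf, hv]
    simp [hq.2]
  have hltf : ∑ q ∈ Finset.univ.filter (fun q : Fin m × Fin m => q.1 < q.2), f q
      = ∑ q ∈ Finset.univ.filter (fun q : Fin m × Fin m => q.1 < q.2), v q := by
    apply Finset.sum_congr rfl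
    intro q hq
    simp only [Finset.mem_filter] at hq
    rw [hf, hv]
    simp [ne_of_lt hq.2]
  have htot : ∑ q : Fin m × Fin m, v q = (∑ i, h i)^2 := by
    rw [hv, Fintype.sum_prod_type, sq, Finset.sum_mul_sum]
  have hgt : ∑ q ∈ Finset.univ.filter (fun q : Fin m × Fin m => q.2 < q.1), v q
      = ∑ q ∈ Finset.univ.filter (fun q : Fin m × Fin m => q.1 < q.2), v q := by
    apply Finset.sum_nbij' (fun q => Prod.swap q) (fun q => Prod.swap q)
    · intro a ha; simp only [Finset.mem_filter, Finset.mem_univ, true_and] at *; exact ha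
    · intro a ha; simp only [Finset.mem_filter, Finset.mem_univ, true_and] at *; exact ha
    · intro a _; simp
    · intro a _; simp
    · intro a _; rw [hv]; simp [mul_comm]
  have hdecomp : ∑ q : Fin m × Fin m, v q =
      ∑ q ∈ Finset.univ.filter (fun q : Fin m × Fin m => q.1 = q.2), v q
      + ∑ q ∈ Finset.univ.filter (fun q : Fin m × Fin m => q.1 < q.2), v q
      + ∑ q ∈ Finset.univ.filter (fun q : Fin m × Fin m => q.2 < q.1), v q := by
    rw [← Finset.sum_filter_add_sum_filter_not Finset.univ (fun q : Fin m × Fin m => q.1 ≤ q.2) v]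
    have h1 : ∑ q ∈ Finset.univ.filter (fun q : Fin m × Fin m => q.1 ≤ q.2), v q =
        ∑ q ∈ Finset.univ.filter (fun q : Fin m × Fin m => q.1 = q.2), v q
        + ∑ q ∈ Finset.univ.filter (fun q : Fin m × Fin m => q.1 < q.2), v q := by
      rw [← Finset.sum_filter_add_sum_filter_not
        (Finset.univ.filter (fun q : Fin m × Fin m => q.1 ≤ q.2)) (fun q => q.1 = q.2) v]
      congr 1
      · congr 1; ext q
        simp only [Finset.mem_filter, Finset.mem_univ, true_and]
        exact ⟨fun ⟨_, h2⟩ => h2, fun h2 => ⟨le_of_eq h2, h2⟩⟩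
      · congr 1; ext q
        simp only [Finset.mem_filter, Finset.mem_univ, true_and]
        exact ⟨fun ⟨h1, h2⟩ => lt_of_le_of_ne h1 h2, fun h1 => ⟨le_of_lt h1, ne_of_lt h1⟩⟩
    have h2 : ∑ q ∈ Finset.univ.filter (fun q : Fin m × Fin m => ¬ q.1 ≤ q.2), v q =
        ∑ q ∈ Finset.univ.filter (fun q : Fin m × Fin m => q.2 < q.1), v q := by
      congr 1; ext q
      simp only [Finset.mem_filter, Finset.mem_univ, true_and, not_le]
    rw [h1, h2]
  rw [step0, hsplit, hdiagf, hltf]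
  rw [htot] at hdecomp
  rw [hgt] at hdecomp
  linarith

lemma entry_std {T m : ℕ} (G : Matrix (Fin T) (Fin m) ℝ) (t : Fin T) (i j : Fin m) :
    (Gᵀ * Matrix.single t t (1:ℝ) * G) i j = G t i * G t j := by
  rw [Matrix.mul_apply]
  simp only [Matrix.mul_apply, Matrix.single, Matrix.of_apply, Matrix.transpose_apply]
  simp [ite_and, Finset.sum_ite_eq, mul_ite, ite_mul, mul_comm]

theorem statement7 (T k : ℕ) (hk : 1 ≤ k) (hkT : k < T)
    (d : Fin T → ℝ) (hd : ∀ t, 0 < d t)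
    (F : Matrix (Fin T) (Fin k) ℝ) (hF : F.rank = k)
    (G : Matrix (Fin T) (Fin (T - k)) ℝ)
    (hFG : Fᵀ * (Matrix.diagonal d)⁻¹ * G = 0)
    (hGG : Gᵀ * (Matrix.diagonal d)⁻¹ * G = 1)
    (X : Matrix {q : Fin (T - k) × Fin (T - k) // q.1 ≤ q.2} (Fin T) ℝ)
    (hX : ∀ (t : Fin T) (q : {q : Fin (T - k) × Fin (T - k) // q.1 ≤ q.2}),
      X q t = vech (Gᵀ * Matrix.single t t (1 : ℝ) * G) q)
    (M : Matrix (Fin T) (Fin T) ℝ)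
    (hM : M = 1 - F * (Fᵀ * (Matrix.diagonal d)⁻¹ * F)⁻¹ * Fᵀ * (Matrix.diagonal d)⁻¹)
    (Φ : Matrix (Fin T) (Fin T) ℝ)
    (hΦ : Φ = Matrix.diagonal d - F * (Fᵀ * (Matrix.diagonal d)⁻¹ * F)⁻¹ * Fᵀ) :
    (IsUnit (Matrix.hadamard M M) ↔ X.rank = T) ∧
      (X.rank = T ↔ IsUnit (Matrix.hadamard Φ Φ)) := by
  have hVdet : IsUnit (Matrix.diagonal d).det := by
    rw [Matrix.det_diagonal]
    exact isUnit_iff_ne_zero.mpr (Finset.prod_ne_zero_iff.mpr fun t _ => (hd t).ne')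
  have hΦG : Φ = G * Gᵀ := by rw [hΦ]; exact phi_eq hkT d hd F hF G hFG hGG
  have hMΦ : M = Φ * (Matrix.diagonal d)⁻¹ := by
    rw [hM, hΦ, Matrix.sub_mul, Matrix.mul_nonsing_inv _ hVdet]
  have hdinv : (Matrix.diagonal d)⁻¹ = Matrix.diagonal fun t => (d t)⁻¹ := diag_inv_eq d hd
  have hMentry : ∀ s t, M s t = Φ s t * (d t)⁻¹ := by
    intro s t; rw [hMΦ, hdinv, Matrix.mul_diagonal]
  have hHad : Matrix.hadamard M M
      = Matrix.hadamard Φ Φ * Matrix.diagonal (fun t => ((d t)⁻¹)^2) := by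
    ext s t
    rw [Matrix.mul_diagonal, Matrix.hadamard_apply, Matrix.hadamard_apply, hMentry]
    ring
  have hMiffΦ : IsUnit (Matrix.hadamard M M) ↔ IsUnit (Matrix.hadamard Φ Φ) := by
    rw [hHad, Matrix.isUnit_iff_isUnit_det, Matrix.isUnit_iff_isUnit_det (Matrix.hadamard Φ Φ),
      Matrix.det_mul, Matrix.det_diagonal]
    have hunit : IsUnit (∏ t, ((d t)⁻¹)^2) := isUnit_iff_ne_zero.mpr
      (Finset.prod_ne_zero_iff.mpr fun t _ => pow_ne_zero _ (inv_ne_zero (hd t).ne'))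
    constructor
    · intro h; exact (IsUnit.mul_iff.mp h).1
    · intro h; exact h.mul hunit
  have hXX : Xᵀ * X = (1/2 : ℝ) • Matrix.hadamard Φ Φ := by
    ext s t
    rw [Matrix.mul_apply]
    have hterm : ∀ q : {q : Fin (T-k) × Fin (T-k) // q.1 ≤ q.2},
        Xᵀ s q * X q t = (if q.val.1 = q.val.2
          then (G s q.val.1 * G t q.val.1) * (G s q.val.2 * G t q.val.2) / 2
          else (G s q.val.1 * G t q.val.1) * (G s q.val.2 * G t q.val.2)) := by
      intro q
      rw [Matrix.transpose_apply, hX, hX]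
      simp only [vech]
      by_cases hq : q.val.1 = q.val.2
      · simp only [hq, if_true, entry_std]
        rw [div_mul_div_comm, Real.mul_self_sqrt (by norm_num : (0:ℝ) ≤ 2)]
        ring_nf
      · simp only [hq, if_false, entry_std]
        ring
    rw [Finset.sum_congr rfl (fun q _ => hterm q)]
    have hs := sum_pairs (fun i => G s i * G t i)
    rw [hs, hΦG]
    simp only [Matrix.smul_apply, Matrix.hadamard_apply, Matrix.mul_apply,
      Matrix.transpose_apply, smul_eq_mul, sq]
    ring
  have hrank : X.rank = T ↔ IsUnit (Matrix.hadamard Φ Φ) := by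
    rw [← Matrix.rank_transpose_mul_self X, ← isUnit_iff_rank_eq (Xᵀ * X), hXX,
      Matrix.isUnit_iff_isUnit_det, Matrix.det_smul,
      Matrix.isUnit_iff_isUnit_det (Matrix.hadamard Φ Φ)]
    constructor
    · intro h; exact (IsUnit.mul_iff.mp h).2
    · intro h
      exact (isUnit_iff_ne_zero.mpr (pow_ne_zero _ (by norm_num : (1/2:ℝ) ≠ 0))).mul h
  exact ⟨hMiffΦ.trans hrank.symm, hrank⟩
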